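/- In the setting of cancellation of a pair x, y with c_{xy} = 1 in an 𝔽₂ chain complex: with f, g, d' as defined, f ∘ g = id on C', and g ∘ f = id + h∘d + d∘h on C, where h is the linear map with h(y) = x and h(a) = 0 for all basis elements a ≠ y. Hence f and g are mutually inverse homotopy equivalences. -/
import Mathlib

private lemma sum_split_cancel {G : Type*} [Fintype G] [DecidableEq G] (x y : G) (hxy : x ≠ y)
    (f : G → ZMod 2) :
    ∑ e : {g : G // g ≠ x ∧ g ≠ y}, f ↑e = f x + f y + ∑ e : G, f e := by
  have h1 : ∑ e : {g : G // g ≠ x ∧ g ≠ y}, f ↑e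
      = ∑ e ∈ Finset.univ.filter (fun g => g ≠ x ∧ g ≠ y), f e :=
    (Finset.sum_subtype (p := fun g => g ≠ x ∧ g ≠ y)
      (s := Finset.univ.filter (fun g => g ≠ x ∧ g ≠ y)) (by simp) f).symm
  have h2 : ∑ e ∈ Finset.univ.filter (fun g => ¬(g ≠ x ∧ g ≠ y)), f e = f x + f y := by
    have hs : Finset.univ.filter (fun g : G => ¬(g ≠ x ∧ g ≠ y)) = {x, y} := by
      ext z; simp; tauto
    rw [hs, Finset.sum_pair hxy]
  have h3 := Finset.sum_filter_add_sum_filter_not Finset.univ (fun g : G => g ≠ x ∧ g ≠ y) f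
  rw [h2] at h3
  have h4 := eq_sub_of_add_eq h3
  rw [h1, h4, CharTwo.sub_eq_add]
  ring

/-- In the cancellation setup over `𝔽₂` (basis `G`, coefficients `c`, `x ≠ y`
with `c_{xy} = 1`), with `f`, `g` as in the cancellation lemma and `h` the map
with `h(y) = x` and `h(a) = 0` for `a ≠ y`: `f ∘ g = id` on `C'` and
`g ∘ f = id + h∘d + d∘h` on `C`, all in coefficient form. -/
theorem cancellation_homotopy_equivalence {G : Type*} [Fintype G] [DecidableEq G]
    (c : G → G → ZMod 2)
    (hd2 : ∀ a b : G, ∑ e : G, c a e * c e b = 0)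
    (x y : G) (hxy : x ≠ y) (hcxy : c x y = 1) :
    (∀ a b : {g : G // g ≠ x ∧ g ≠ y},
        ∑ e : G,
          ((if (↑a : G) = e then 1 else 0) + (if e = x then c ↑a y else 0))
            * (if e = y then c x ↑b else if e = ↑b then 1 else 0)
          = if a = b then 1 else 0) ∧
    (∀ a b : G,
        ∑ e : {g : G // g ≠ x ∧ g ≠ y},
          (if a = y then c x ↑e else if a = ↑e then 1 else 0)
            * ((if (↑e : G) = b then 1 else 0) + (if b = x then c ↑e y else 0))
          = (if a = b then 1 else 0)
            + (∑ e : G, c a e * (if e = y ∧ b = x then 1 else 0))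
            + (∑ e : G, (if a = y ∧ e = x then (1 : ZMod 2) else 0) * c e b)) := by
  constructor
  · rintro ⟨a, hax, hay⟩ ⟨b, hbx, hby⟩
    have key : ∀ e : G, (((if a = e then (1:ZMod 2) else 0) + if e = x then c a y else 0)
        * (if e = y then c x b else if e = b then 1 else 0))
        = if a = e then (if a = b then 1 else 0) else 0 := by
      intro e
      by_cases h1 : a = e
      · subst h1; simp [hax, hay]
      · by_cases h2 : e = x
        · subst h2; simp [h1, hxy, Ne.symm hbx]
        · simp [h1, h2]
    simp only [key]
    rw [Finset.sum_ite_eq]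
    simp [Subtype.mk.injEq]
  · intro a b
    rw [sum_split_cancel x y hxy (fun e => (if a = y then c x e else if a = e then 1 else 0)
      * ((if e = b then 1 else 0) + if b = x then c e y else 0))]
    simp only [ite_and, mul_add, mul_ite, ite_mul, mul_one, mul_zero, one_mul, zero_mul,
      Finset.sum_add_distrib, Finset.sum_ite_eq, Finset.sum_ite_eq', Finset.mem_univ, if_true,
      Finset.sum_ite_irrel, Finset.sum_const_zero]
    simp only [hd2, hcxy, mul_one, one_mul, mul_zero]
    have h2 : ∀ z : ZMod 2, z + z = 0 := fun z => CharTwo.add_self_eq_zero z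
    split_ifs <;>
      first
        | (exfalso; subst_vars; simp_all; done)
        | (subst_vars; ring_nf;
           simp [show (2:ZMod 2) = 0 by decide, show (3:ZMod 2) = 1 by decide, hcxy,
             add_comm, add_left_comm, add_assoc]; done)
        | (subst_vars; ring_nf)
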